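/- Let (V, ⟨-,-⟩, τ) be a bilinear group, let a, s₀ ∈ V, let t ≥ 0, let p₁, …, p_t be positive integers, let p̄ be a positive common multiple of p₁, …, p_t, and let χ be an integer. Set δ̄ := Σ_{i=1}^{t}(p̄ − p̄/pᵢ) − p̄·χ. Assume: (i) ⟨a, s₀⟩ = 1; (ii) τ(s₀) = s₀; (iii) τ^{p̄}(a) − a = δ̄·s₀. Then 2·Σ_{j=0}^{p̄−1} ⟨τʲ(a), a⟩ = −p̄·δ̄ = p̄·(p̄·χ − Σ_{i=1}^{t}(p̄ − p̄/pᵢ)). -/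

import Mathlib

/-- The lattice computation underlying the orbifold Euler characteristic formula:
in a bilinear group `(V, β, τ)`, if `β a s₀ = 1`, `τ s₀ = s₀` and
`τ^p̄ a - a = δ̄ • s₀` where `δ̄ = ∑ᵢ (p̄ - p̄/pᵢ) - p̄ χ`, then
`2 ∑_{j=0}^{p̄-1} β (τʲ a) a = -p̄ δ̄ = p̄ (p̄ χ - ∑ᵢ (p̄ - p̄/pᵢ))`. -/
theorem orbifold_euler_characteristic_computation
    (V : Type*) [AddCommGroup V] (β : V → V → ℤ)
    (hβ₁ : ∀ x y z : V, β (x + y) z = β x z + β y z)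
    (hβ₂ : ∀ x y z : V, β x (y + z) = β x y + β x z)
    (τ : AddAut V)
    (hτ : ∀ x y : V, β y x = -β x (τ y))
    (a s₀ : V) (t : ℕ) (p : Fin t → ℕ) (hp : ∀ i, 0 < p i)
    (pbar : ℕ) (hpbar : 0 < pbar) (hdvd : ∀ i, p i ∣ pbar) (χ : ℤ)
    (δ : ℤ) (hδ : δ = (∑ i, ((pbar : ℤ) - ((pbar / p i : ℕ) : ℤ))) - (pbar : ℤ) * χ)
    (h₁ : β a s₀ = 1) (h₂ : τ s₀ = s₀)
    (h₃ : (pbar • τ) a - a = δ • s₀) :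
    2 * (∑ j ∈ Finset.range pbar, β ((j • τ) a) a) = -(pbar : ℤ) * δ ∧
      -(pbar : ℤ) * δ =
        (pbar : ℤ) * ((pbar : ℤ) * χ - ∑ i, ((pbar : ℤ) - ((pbar / p i : ℕ) : ℤ))) := by
  -- β x 0 = 0
  have hzero : ∀ x : V, β x (0 : V) = 0 := by
    intro x
    have := hβ₂ x 0 0
    simp only [add_zero] at this
    linarith
  -- β x (n • y) = n * β x y
  have hsmul : ∀ (n : ℤ) (x y : V), β x (n • y) = n * β x y := by
    intro n x y
    induction n using Int.induction_on with
    | zero => simpa using hzero x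
    | succ k ih =>
        have : ((k : ℤ) + 1) • y = (k : ℤ) • y + y := by
          rw [add_smul, one_smul]
        rw [this, hβ₂, ih]; ring
    | pred k ih =>
        have : (-(k : ℤ) - 1) • y = (-(k : ℤ)) • y + (-1 : ℤ) • y := by
          rw [← add_smul]; ring_nf
        have hneg : β x ((-1 : ℤ) • y) = - β x y := by
          have := hβ₂ x y ((-1 : ℤ) • y)
          have h0 : y + (-1 : ℤ) • y = 0 := by simp
          rw [h0, hzero] at this
          linarith
        rw [this, hβ₂, ih, hneg]; ring
  -- τ-invariance of β
  have hinv : ∀ x y : V, β (τ x) (τ y) = β x y := by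
    intro x y
    have h1 : β y (τ x) = -β (τ x) (τ y) := hτ (τ x) y
    have h2 : β x y = -β y (τ x) := hτ y x
    linarith
  have hinvn : ∀ (n : ℕ) (x y : V), β ((n • τ) x) ((n • τ) y) = β x y := by
    intro n
    induction n with
    | zero => intro x y; simp
    | succ k ih =>
        intro x y
        have hx : ((k + 1) • τ) x = (k • τ) (τ x) := by
          rw [succ_nsmul, AddAut.add_apply]
        have hy : ((k + 1) • τ) y = (k • τ) (τ y) := by
          rw [succ_nsmul, AddAut.add_apply]
        rw [hx, hy, ih, hinv]
  -- τ^n fixes s₀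
  have hs₀ : ∀ n : ℕ, (n • τ) s₀ = s₀ := by
    intro n
    induction n with
    | zero => simp
    | succ k ih =>
        have : ((k + 1) • τ) s₀ = τ ((k • τ) s₀) := by
          rw [succ_nsmul', AddAut.add_apply]
        rw [this, ih, h₂]
  -- β (τ^k a) s₀ = 1
  have hβs : ∀ k : ℕ, β ((k • τ) a) s₀ = 1 := by
    intro k
    have := hinvn k a s₀
    rwa [hs₀ k, h₁] at this
  -- τ^pbar a = a + δ • s₀
  have hpow : (pbar • τ) a = a + δ • s₀ := by
    have h := eq_add_of_sub_eq h₃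
    rw [h, add_comm]
  -- key per-term identity
  have key : ∀ j ∈ Finset.range pbar,
      β ((j • τ) a) a = -(β (((pbar - 1 - j) • τ) a) a) - δ := by
    intro j hj
    rw [Finset.mem_range] at hj
    -- β (τʲ a) a = -β a (τ^{j+1} a)
    have step1 : β ((j • τ) a) a = -β a (((j + 1) • τ) a) := by
      have h := hτ a ((j • τ) a)
      have ht : τ ((j • τ) a) = ((j + 1) • τ) a := by
        rw [succ_nsmul', AddAut.add_apply]
      rw [ht] at h
      exact h
    -- β a (τ^{j+1} a) = β (τ^{p̄-1-j} a) (τ^{p̄} a)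
    have harith : (pbar - 1 - j) + (j + 1) = pbar := by omega
    have step2 : β a (((j + 1) • τ) a)
        = β (((pbar - 1 - j) • τ) a) ((pbar • τ) a) := by
      have := hinvn (pbar - 1 - j) a (((j + 1) • τ) a)
      have hcomp : ((pbar - 1 - j) • τ) (((j + 1) • τ) a) = (pbar • τ) a := by
        rw [← AddAut.add_apply, ← add_nsmul, harith]
      rw [hcomp] at this
      exact this.symm
    have step3 : β (((pbar - 1 - j) • τ) a) ((pbar • τ) a)
        = β (((pbar - 1 - j) • τ) a) a + δ := by
      rw [hpow, hβ₂, hsmul, hβs]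
      ring
    rw [step1, step2, step3]
    ring
  set S := ∑ j ∈ Finset.range pbar, β ((j • τ) a) a with hS
  have hrefl : ∑ j ∈ Finset.range pbar, β (((pbar - 1 - j) • τ) a) a = S :=
    Finset.sum_range_reflect (fun k => β ((k • τ) a) a) pbar
  have hsum : S = -S - (pbar : ℤ) * δ := by
    calc S = ∑ j ∈ Finset.range pbar, (-(β (((pbar - 1 - j) • τ) a) a) - δ) :=
            Finset.sum_congr rfl key
      _ = -(∑ j ∈ Finset.range pbar, β (((pbar - 1 - j) • τ) a) a)
            - (pbar : ℤ) * δ := by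
            rw [Finset.sum_sub_distrib, Finset.sum_const, Finset.card_range,
              Finset.sum_neg_distrib]
            push_cast
            ring
      _ = -S - (pbar : ℤ) * δ := by rw [hrefl]
  constructor
  · linarith
  · rw [hδ]; ring
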